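/- There is a functor S : Track_O → Track_O together with a natural transformation s : S → Id such that for every track category X with object set O: (a) the underlying category (S X)_0 = FVX_0 of objects and 1-arrows of S X is a free category, and (b) the map s_X : S(X) → X is a 2-equivalence, i.e. it is the identity on objects and each induced functor S(X)(a,b) → X(a,b) on hom-groupoids is an equivalence of groupoids. Explicitly, S X = X(ε_{X_0}) is obtained by pulling back the arrows of X along ε_{X_0} × ε_{X_0}, where ε_{X_0} : FVX_0 → X_0 is the counit of the free-category adjunction. -/
import Mathlib


/-!
STATEMENT 15: There is a functor `S : Track_O → Track_O` together with a natural
transformation `s : S → Id` such that for every track category `X` with object set `O`: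
(a) the underlying category `(S X)₀ = FVX₀` of objects and 1-arrows of `S X` is a free
category, and (b) the map `s_X : S(X) → X` is a 2-equivalence, i.e. it is the identity on
objects and each induced functor `S(X)(a,b) → X(a,b)` on hom-groupoids is an equivalence
of groupoids.  (Explicitly, `S X = X(ε_{X₀})` is obtained by pulling back the arrows of
`X` along `ε_{X₀} × ε_{X₀}`, where `ε_{X₀} : FVX₀ → X₀` is the counit of the
free-category adjunction.)

Track categories with object set `O` are constructed concretely as strict groupoid-
enriched categories (`TrackO`), with morphisms (`TrackOHom`) the enriched functors that
are the identity on objects; `Cat_O` and freeness of a category in `Cat_O` (via the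
universal property of the free category on a graph) are also concrete.
-/

open CategoryTheory

universe u

/-- A small category with object set `O` (an object of `Cat_O`). -/
structure CatO (O : Type u) : Type (u + 1) where
  Hom : O → O → Type u
  id : ∀ a, Hom a a
  comp : ∀ {a b c}, Hom a b → Hom b c → Hom a c
  id_comp : ∀ {a b} (f : Hom a b), comp (id a) f = f
  comp_id : ∀ {a b} (f : Hom a b), comp f (id b) = f
  assoc : ∀ {a b c d} (f : Hom a b) (g : Hom b c) (h : Hom c d),
    comp (comp f g) h = comp f (comp g h)

variable {O : Type u}

/-- A morphism in `Cat_O`: a functor which is the identity on objects. -/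
structure CatOHom (A B : CatO O) where
  map : ∀ {a b}, A.Hom a b → B.Hom a b
  map_id : ∀ a, map (A.id a) = B.id a
  map_comp : ∀ {a b c} (f : A.Hom a b) (g : A.Hom b c),
    map (A.comp f g) = B.comp (map f) (map g)

/-- A category in `Cat_O` is *free* if it is freely generated by a directed graph
(formulated via the universal property of the free category on a graph). -/
def CatO.IsFree (A : CatO O) : Prop :=
  ∃ (G : O → O → Type u) (ι : ∀ {a b}, G a b → A.Hom a b),
    ∀ (B : CatO O) (f : ∀ {a b}, G a b → B.Hom a b),
      ∃! F : CatOHom A B, ∀ {a b} (g : G a b), F.map (ι g) = f g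

/-- A track category with object set `O`: a (strict) category enriched in groupoids,
with 1-cells `Hom`, vertical (groupoid) structure `Two`, `vid`, `vcomp`, `vinv`, and
horizontal composition `hcomp` of 2-cells. -/
structure TrackO (O : Type u) : Type (u + 1) where
  Hom : O → O → Type u
  id : ∀ a, Hom a a
  comp : ∀ {a b c}, Hom a b → Hom b c → Hom a c
  id_comp : ∀ {a b} (f : Hom a b), comp (id a) f = f
  comp_id : ∀ {a b} (f : Hom a b), comp f (id b) = f
  assoc : ∀ {a b c d} (f : Hom a b) (g : Hom b c) (h : Hom c d),
    comp (comp f g) h = comp f (comp g h)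
  Two : ∀ {a b}, Hom a b → Hom a b → Type u
  vid : ∀ {a b} (f : Hom a b), Two f f
  vcomp : ∀ {a b} {f g h : Hom a b}, Two f g → Two g h → Two f h
  vid_comp : ∀ {a b} {f g : Hom a b} (α : Two f g), vcomp (vid f) α = α
  vcomp_id : ∀ {a b} {f g : Hom a b} (α : Two f g), vcomp α (vid g) = α
  vassoc : ∀ {a b} {f g h k : Hom a b} (α : Two f g) (β : Two g h) (γ : Two h k),
    vcomp (vcomp α β) γ = vcomp α (vcomp β γ)
  vinv : ∀ {a b} {f g : Hom a b}, Two f g → Two g f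
  vinv_vcomp : ∀ {a b} {f g : Hom a b} (α : Two f g), vcomp (vinv α) α = vid g
  vcomp_vinv : ∀ {a b} {f g : Hom a b} (α : Two f g), vcomp α (vinv α) = vid f
  hcomp : ∀ {a b c} {f f' : Hom a b} {g g' : Hom b c},
    Two f f' → Two g g' → Two (comp f g) (comp f' g')
  hcomp_vid : ∀ {a b c} (f : Hom a b) (g : Hom b c),
    hcomp (vid f) (vid g) = vid (comp f g)
  interchange : ∀ {a b c} {f f' f'' : Hom a b} {g g' g'' : Hom b c}
    (α : Two f f') (α' : Two f' f'') (β : Two g g') (β' : Two g' g''),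
    hcomp (vcomp α α') (vcomp β β') = vcomp (hcomp α β) (hcomp α' β')

/-- The underlying category `X₀` of objects and 1-arrows of a track category. -/
def TrackO.underlying (X : TrackO O) : CatO O :=
  ⟨X.Hom, X.id, X.comp, X.id_comp, X.comp_id, X.assoc⟩

/-- A morphism of track categories with object set `O`: a groupoid-enriched functor which
is the identity on objects. -/
structure TrackOHom (X Y : TrackO O) where
  map1 : ∀ {a b}, X.Hom a b → Y.Hom a b
  map2 : ∀ {a b} {f g : X.Hom a b}, X.Two f g → Y.Two (map1 f) (map1 g)
  map1_id : ∀ a, map1 (X.id a) = Y.id a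
  map1_comp : ∀ {a b c} (f : X.Hom a b) (g : X.Hom b c),
    map1 (X.comp f g) = Y.comp (map1 f) (map1 g)
  map2_vid : ∀ {a b} (f : X.Hom a b), map2 (X.vid f) = Y.vid (map1 f)
  map2_vcomp : ∀ {a b} {f g h : X.Hom a b} (α : X.Two f g) (β : X.Two g h),
    map2 (X.vcomp α β) = Y.vcomp (map2 α) (map2 β)

/-- Composition of morphisms of track categories. -/
def TrackOHom.comp' {X Y Z : TrackO O} (F : TrackOHom X Y) (G : TrackOHom Y Z) :
    TrackOHom X Z where
  map1 f := G.map1 (F.map1 f)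
  map2 α := G.map2 (F.map2 α)
  map1_id a := by show G.map1 (F.map1 _) = _; rw [F.map1_id, G.map1_id]
  map1_comp f g := by show G.map1 (F.map1 _) = _; rw [F.map1_comp, G.map1_comp]
  map2_vid f := by show G.map2 (F.map2 _) = _; rw [F.map2_vid, G.map2_vid]
  map2_vcomp α β := by show G.map2 (F.map2 _) = _; rw [F.map2_vcomp, G.map2_vcomp]

/-- `F : X → Y` is a 2-equivalence: it is the identity on objects (by construction), and
each induced functor on hom-groupoids `X(a,b) → Y(a,b)` is an equivalence of groupoids
(fully faithful on 2-cells and essentially surjective on 1-cells). -/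
def TrackOHom.Is2Equivalence {X Y : TrackO O} (F : TrackOHom X Y) : Prop :=
  (∀ {a b : O} (f g : X.Hom a b),
    Function.Bijective (fun α : X.Two f g => F.map2 α)) ∧
  (∀ {a b : O} (h : Y.Hom a b), ∃ f : X.Hom a b, Nonempty (Y.Two (F.map1 f) h))

namespace FreeRes

variable {O : Type u}

/-- Paths in a graph. -/
inductive Path (H : O → O → Type u) : O → O → Type u
  | nil : ∀ a, Path H a a
  | cons : ∀ {a b c}, H a b → Path H b c → Path H a c

def Path.append {H : O → O → Type u} : ∀ {a b c}, Path H a b → Path H b c → Path H a c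
  | _, _, _, .nil _, q => q
  | _, _, _, .cons e p, q => .cons e (p.append q)

lemma Path.append_nil {H : O → O → Type u} : ∀ {a b} (p : Path H a b),
    p.append (Path.nil b) = p
  | _, _, .nil a => rfl
  | _, _, .cons e p => by
      show Path.cons e (p.append _) = _
      rw [append_nil p]

lemma Path.append_assoc {H : O → O → Type u} :
    ∀ {a b c d} (p : Path H a b) (q : Path H b c) (r : Path H c d),
      (p.append q).append r = p.append (q.append r)
  | _, _, _, _, .nil a, q, r => rfl
  | _, _, _, _, .cons e p, q, r => by
      show Path.cons e ((p.append q).append r) = Path.cons e (p.append (q.append r))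
      rw [append_assoc p q r]

def Path.eval (X : TrackO O) : ∀ {a b}, Path X.Hom a b → X.Hom a b
  | _, _, .nil a => X.id a
  | _, _, .cons e p => X.comp e (p.eval X)

lemma Path.eval_append (X : TrackO O) : ∀ {a b c} (p : Path X.Hom a b) (q : Path X.Hom b c),
    (p.append q).eval X = X.comp (p.eval X) (q.eval X)
  | _, _, _, .nil a, q => (X.id_comp _).symm
  | _, _, _, .cons e p, q => by
      show X.comp e ((p.append q).eval X) = X.comp (X.comp e (p.eval X)) (q.eval X)
      rw [eval_append X p q, ← X.assoc]

def Path.map {X Y : TrackO O} (F : TrackOHom X Y) : ∀ {a b}, Path X.Hom a b → Path Y.Hom a b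
  | _, _, .nil a => .nil a
  | _, _, .cons e p => .cons (F.map1 e) (p.map F)

lemma Path.eval_map {X Y : TrackO O} (F : TrackOHom X Y) :
    ∀ {a b} (p : Path X.Hom a b), (p.map F).eval Y = F.map1 (p.eval X)
  | _, _, .nil a => (F.map1_id a).symm
  | _, _, .cons e p => by
      show Y.comp (F.map1 e) ((p.map F).eval Y) = F.map1 (X.comp e (p.eval X))
      rw [eval_map F p, F.map1_comp]

lemma Path.map_append {X Y : TrackO O} (F : TrackOHom X Y) :
    ∀ {a b c} (p : Path X.Hom a b) (q : Path X.Hom b c),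
      (p.append q).map F = (p.map F).append (q.map F)
  | _, _, _, .nil a, q => rfl
  | _, _, _, .cons e p, q => by
      show Path.cons (F.map1 e) ((p.append q).map F)
        = Path.cons (F.map1 e) ((p.map F).append (q.map F))
      rw [map_append F p q]

/-- Lift of a graph map to paths, for the universal property. -/
def Path.lift {G : O → O → Type u} (B : CatO O) (f : ∀ {a b}, G a b → B.Hom a b) :
    ∀ {a b}, Path G a b → B.Hom a b
  | _, _, .nil a => B.id a
  | _, _, .cons e p => B.comp (f e) (p.lift B f)

lemma Path.lift_append {G : O → O → Type u} (B : CatO O) (f : ∀ {a b}, G a b → B.Hom a b) :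
    ∀ {a b c} (p : Path G a b) (q : Path G b c),
      (p.append q).lift B f = B.comp (p.lift B f) (q.lift B f)
  | _, _, _, .nil a, q => (B.id_comp _).symm
  | _, _, _, .cons e p, q => by
      show B.comp (f e) ((p.append q).lift B f) = B.comp (B.comp (f e) (p.lift B f)) (q.lift B f)
      rw [lift_append B f p q, ← B.assoc]

/-- Transport of a 2-cell along equalities of its boundary 1-cells. -/
def cast2 {X : TrackO O} {a b} {f f' g g' : X.Hom a b} (h : f = g) (h' : f' = g')
    (α : X.Two f f') : X.Two g g' := h ▸ h' ▸ α

lemma cast2_heq {X : TrackO O} {a b} {f f' g g' : X.Hom a b} (h : f = g) (h' : f' = g')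
    (α : X.Two f f') : HEq (cast2 h h' α) α := by subst h; subst h'; rfl

lemma cast2_vid {X : TrackO O} {a b} {f g : X.Hom a b} (h : f = g) :
    cast2 h h (X.vid f) = X.vid g := by subst h; rfl

lemma cast2_vcomp {X : TrackO O} {a b} {f f₂ g g₂ k k₂ : X.Hom a b}
    (h1 : f = f₂) (h2 : g = g₂) (h3 : k = k₂) (α : X.Two f g) (β : X.Two g k) :
    cast2 h1 h3 (X.vcomp α β) = X.vcomp (cast2 h1 h2 α) (cast2 h2 h3 β) := by
  subst h1; subst h2; subst h3; rfl

/-- The free resolution track category. -/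
def S (X : TrackO O) : TrackO O where
  Hom := Path X.Hom
  id := Path.nil
  comp := Path.append
  id_comp _ := rfl
  comp_id := Path.append_nil
  assoc := Path.append_assoc
  Two f g := X.Two (f.eval X) (g.eval X)
  vid f := X.vid (f.eval X)
  vcomp := X.vcomp
  vid_comp := X.vid_comp
  vcomp_id := X.vcomp_id
  vassoc := X.vassoc
  vinv := X.vinv
  vinv_vcomp := X.vinv_vcomp
  vcomp_vinv := X.vcomp_vinv
  hcomp {a b c f f' g g'} α β :=
    cast2 (Path.eval_append X f g).symm (Path.eval_append X f' g').symm (X.hcomp α β)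
  hcomp_vid f g := by
    show cast2 (Path.eval_append X f g).symm (Path.eval_append X f g).symm
        (X.hcomp (X.vid (f.eval X)) (X.vid (g.eval X))) = X.vid ((f.append g).eval X)
    rw [X.hcomp_vid, cast2_vid]
  interchange {a b c f f' f'' g g' g''} α α' β β' := by
    show cast2 (Path.eval_append X f g).symm (Path.eval_append X f'' g'').symm
        (X.hcomp (X.vcomp α α') (X.vcomp β β'))
      = X.vcomp
        (cast2 (Path.eval_append X f g).symm (Path.eval_append X f' g').symm (X.hcomp α β))
        (cast2 (Path.eval_append X f' g').symm (Path.eval_append X f'' g'').symm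
          (X.hcomp α' β'))
    rw [X.interchange,
      cast2_vcomp (Path.eval_append X f g).symm (Path.eval_append X f' g').symm
        (Path.eval_append X f'' g'').symm]

def smorMap2 {X Y : TrackO O} (F : TrackOHom X Y) {a b} {f g : Path X.Hom a b}
    (α : X.Two (f.eval X) (g.eval X)) : Y.Two ((f.map F).eval Y) ((g.map F).eval Y) :=
  cast2 (Path.eval_map F f).symm (Path.eval_map F g).symm (F.map2 α)

lemma smor_vid {X Y : TrackO O} (F : TrackOHom X Y) {a b} (f : Path X.Hom a b) :
    smorMap2 F (X.vid (f.eval X))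
      = Y.vid ((f.map F).eval Y) := by
  unfold smorMap2
  rw [F.map2_vid, cast2_vid]

lemma smor_vcomp {X Y : TrackO O} (F : TrackOHom X Y) {a b} {f g h : Path X.Hom a b}
    (α : X.Two (f.eval X) (g.eval X)) (β : X.Two (g.eval X) (h.eval X)) :
    smorMap2 F (X.vcomp α β) = Y.vcomp (smorMap2 F α) (smorMap2 F β) := by
  unfold smorMap2
  rw [F.map2_vcomp,
    cast2_vcomp (Path.eval_map F f).symm (Path.eval_map F g).symm (Path.eval_map F h).symm]

def Smor {X Y : TrackO O} (F : TrackOHom X Y) : TrackOHom (S X) (S Y) where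
  map1 := Path.map F
  map2 α := smorMap2 F α
  map1_id _ := rfl
  map1_comp := Path.map_append F
  map2_vid f := smor_vid F f
  map2_vcomp α β := smor_vcomp F α β

def sX (X : TrackO O) : TrackOHom (S X) X where
  map1 := Path.eval X
  map2 α := α
  map1_id _ := rfl
  map1_comp := Path.eval_append X
  map2_vid _ := rfl
  map2_vcomp _ _ := rfl

lemma TrackOHom.ext' {X Y : TrackO O} {F G : TrackOHom X Y}
    (h1 : ∀ {a b} (f : X.Hom a b), F.map1 f = G.map1 f)
    (h2 : ∀ {a b} {f g : X.Hom a b} (α : X.Two f g), HEq (F.map2 α) (G.map2 α)) :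
    F = G := by
  obtain ⟨m1, m2, _, _, _, _⟩ := F
  obtain ⟨n1, n2, _, _, _, _⟩ := G
  have e1 : @m1 = @n1 := by funext a b f; exact h1 f
  subst e1
  have e2 : @m2 = @n2 := by funext a b f g α; exact eq_of_heq (h2 α)
  subst e2
  rfl

lemma CatOHom.ext' {A B : CatO O} {F G : CatOHom A B}
    (h1 : ∀ {a b} (f : A.Hom a b), F.map f = G.map f) : F = G := by
  obtain ⟨m, _, _⟩ := F
  obtain ⟨n, _, _⟩ := G
  have e1 : @m = @n := by funext a b f; exact h1 f
  subst e1
  rfl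

end FreeRes

theorem exists_free_resolution_functor_S (O : Type u) :
    ∃ (S : TrackO O → TrackO O)
      (Smor : ∀ {X Y : TrackO O}, TrackOHom X Y → TrackOHom (S X) (S Y))
      (s : ∀ X : TrackO O, TrackOHom (S X) X),
      -- (a) the underlying category `(S X)₀ = FVX₀` is free
      (∀ X : TrackO O, (S X).underlying.IsFree) ∧
      -- (b) `s_X : S(X) → X` is a 2-equivalence
      (∀ X : TrackO O, (s X).Is2Equivalence) ∧
      -- `s` is natural in `X`
      (∀ {X Y : TrackO O} (F : TrackOHom X Y),
        TrackOHom.comp' (Smor F) (s Y) = TrackOHom.comp' (s X) F) := by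
  refine ⟨FreeRes.S, @FreeRes.Smor O, FreeRes.sX, ?_, ?_, ?_⟩
  · -- freeness
    intro X
    refine ⟨X.Hom, fun {a b} g => FreeRes.Path.cons g (FreeRes.Path.nil b), ?_⟩
    intro B f
    refine ⟨⟨fun p => FreeRes.Path.lift B (fun g => f g) p, fun a => rfl,
      FreeRes.Path.lift_append B (fun g => f g)⟩, ?_, ?_⟩
    · intro a b g
      show B.comp (f g) (B.id b) = f g
      exact B.comp_id _
    · intro F hF
      apply FreeRes.CatOHom.ext'
      intro a b p
      induction p with
      | nil a => exact F.map_id a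
      | cons e p ih =>
        have hc := F.map_comp (A := (FreeRes.S X).underlying)
          (FreeRes.Path.cons e (FreeRes.Path.nil _)) p
        exact hc.trans (by rw [hF, ih]; rfl)
  · -- 2-equivalence
    intro X
    constructor
    · intro a b f g
      exact Function.bijective_id
    · intro a b h
      exact ⟨FreeRes.Path.cons h (FreeRes.Path.nil b),
        ⟨FreeRes.cast2 rfl (X.comp_id h) (X.vid (X.comp h (X.id b)))⟩⟩
  · -- naturality
    intro X Y F
    apply FreeRes.TrackOHom.ext'
    · intro a b p
      show (FreeRes.Path.map F p).eval Y = F.map1 (p.eval X)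
      exact FreeRes.Path.eval_map F p
    · intro a b p q α
      show HEq (FreeRes.smorMap2 F α) (F.map2 α)
      exact FreeRes.cast2_heq (FreeRes.Path.eval_map F p).symm
        (FreeRes.Path.eval_map F q).symm (F.map2 α)
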